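/- For every integer k ≥ 1, every complex d×d density matrix ρ and every nonzero positive semidefinite d×d matrix σ with supp(ρ) ⊆ supp(σ), the iterated mean quantity is strictly positive: Q^{im}_{α_k}(ρ‖σ) > 0. Specifically, for every real c with 0 < c < (2^{1−2^k}·(α_k/(α_k−1))·tr(ρ)/tr(σ))^{1/(2^k−1)}, the point Vᵢ = 2^{2^{i−1}−1}·c^{2^{i−1}}·I (1 ≤ i ≤ k), Z = 2^{2^k−1}·c^{2^k}·I is feasible for the defining program and has strictly positive objective value α_k·c·tr(ρ) − (α_k−1)·2^{2^k−1}·c^{2^k}·tr(σ). -/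

import Mathlib

open Matrix ComplexOrder

/-- `α_k = 1 + 1/(2^k - 1)`. -/
noncomputable def alphaIM (k : ℕ) : ℝ := 1 + 1 / (2 ^ k - 1)

/-- Feasibility of `(V₁, …, V_k, Z)` for the primal SDP defining the iterated mean
divergence: `Z ≥ 0`, `V₁ + V₁* ≥ 0`, `Vᵢ* Vᵢ ≤ (Vᵢ₊₁ + Vᵢ₊₁*)/2` for `1 ≤ i ≤ k-1`, and
`V_k* V_k ≤ Z`.  The matrices are indexed by `ℕ`, with only indices `1, …, k` relevant. -/
def QimFeasible {n : Type*} [Fintype n] (k : ℕ)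
    (V : ℕ → Matrix n n ℂ) (Z : Matrix n n ℂ) : Prop :=
  Z.PosSemidef ∧
  (V 1 + (V 1)ᴴ).PosSemidef ∧
  (∀ i : ℕ, 1 ≤ i → i < k →
    ((2 : ℂ)⁻¹ • (V (i + 1) + (V (i + 1))ᴴ) - (V i)ᴴ * V i).PosSemidef) ∧
  (Z - (V k)ᴴ * V k).PosSemidef

/-- The objective `α_k · Re tr(ρ (V₁+V₁*)/2) − (α_k − 1) · Re tr(σ Z)`. -/
noncomputable def QimObj {n : Type*} [Fintype n] (k : ℕ)
    (ρ σ : Matrix n n ℂ) (V : ℕ → Matrix n n ℂ) (Z : Matrix n n ℂ) : ℝ :=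
  alphaIM k * ((ρ * (V 1 + (V 1)ᴴ)).trace.re / 2) - (alphaIM k - 1) * (σ * Z).trace.re

/-- The iterated mean quantity `Q^{im}_{α_k}(ρ‖σ)`. -/
noncomputable def Qim {n : Type*} [Fintype n] (k : ℕ) (ρ σ : Matrix n n ℂ) : ℝ :=
  sSup {q : ℝ | ∃ V Z, QimFeasible k V Z ∧ q = QimObj k ρ σ V Z}

/-- The iterated mean divergence `D^{im}_{α_k}(ρ‖σ) = (1/(α_k−1)) log Q^{im}_{α_k}(ρ‖σ)`. -/
noncomputable def Dim {n : Type*} [Fintype n] (k : ℕ) (ρ σ : Matrix n n ℂ) : ℝ :=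
  (1 / (alphaIM k - 1)) * Real.log (Qim k ρ σ)

/-- Real powers of a Hermitian matrix, via the spectral decomposition (continuous
functional calculus); junk value `0` on non-Hermitian matrices. -/
noncomputable def mrpow {n : Type*} [Fintype n] [DecidableEq n]
    (A : Matrix n n ℂ) (r : ℝ) : Matrix n n ℂ :=
  if h : A.IsHermitian then
    (h.eigenvectorUnitary : Matrix n n ℂ) *
      Matrix.diagonal (fun i => ((h.eigenvalues i ^ r : ℝ) : ℂ)) *
      (h.eigenvectorUnitary : Matrix n n ℂ)ᴴ
  else 0

/-- Matrix geometric mean `A # B = A^{1/2} (A^{-1/2} B A^{-1/2})^{1/2} A^{1/2}`. -/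
noncomputable def geomMean {n : Type*} [Fintype n] [DecidableEq n]
    (A B : Matrix n n ℂ) : Matrix n n ℂ :=
  mrpow A (1/2) * mrpow (mrpow A (-(1/2)) * B * mrpow A (-(1/2))) (1/2) * mrpow A (1/2)

/-- Partial trace over the first tensor factor. -/
noncomputable def ptrFst {α β : Type*} [Fintype α] (M : Matrix (α × β) (α × β) ℂ) :
    Matrix β β ℂ :=
  Matrix.of fun b b' => ∑ a, M (a, b) (a, b')

/-- Iterated geometric mean: `iterGeom σ A k = A₁ # (A₂ # (⋯ # (A_k # σ)⋯))`. -/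
noncomputable def iterGeom {n : Type*} [Fintype n] [DecidableEq n]
    (σ : Matrix n n ℂ) : (ℕ → Matrix n n ℂ) → ℕ → Matrix n n ℂ
  | _, 0 => σ
  | A, (j + 1) => geomMean (A 1) (iterGeom σ (fun i => A (i + 1)) j)

variable {d : ℕ}

section
open scoped MatrixOrder

lemma psdSqrtEx {A : Matrix (Fin d) (Fin d) ℂ} (hA : A.PosSemidef) :
    ∃ S : Matrix (Fin d) (Fin d) ℂ, Sᴴ = S ∧ S * S = A :=
  ⟨CFC.sqrt A, (CFC.sqrt_nonneg A).posSemidef.1.eq, CFC.sqrt_mul_sqrt_self A hA.nonneg⟩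

end

/-- Cauchy–Schwarz for complex sums. -/
lemma csAbs {ι : Type*} [Fintype ι] (f g : ι → ℂ) :
    ‖∑ p, f p * g p‖ ≤
      Real.sqrt (∑ p, ‖f p‖ ^ 2) * Real.sqrt (∑ p, ‖g p‖ ^ 2) := by
  have h1 : ‖∑ p, f p * g p‖ ≤ ∑ p, ‖f p‖ * ‖g p‖ := by
    refine le_trans (norm_sum_le _ _) ?_
    exact le_of_eq (Finset.sum_congr rfl fun p _ => norm_mul _ _)
  refine h1.trans ?_
  have h2 := Finset.sum_mul_sq_le_sq_mul_sq Finset.univ (fun p => ‖f p‖)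
      (fun p => ‖g p‖)
  have h3 : 0 ≤ ∑ p, ‖f p‖ * ‖g p‖ :=
    Finset.sum_nonneg fun p _ => mul_nonneg (norm_nonneg _) (norm_nonneg _)
  calc ∑ p, ‖f p‖ * ‖g p‖
      = Real.sqrt ((∑ p, ‖f p‖ * ‖g p‖) ^ 2) := by
        rw [Real.sqrt_sq h3]
    _ ≤ Real.sqrt ((∑ p, ‖f p‖ ^ 2) * ∑ p, ‖g p‖ ^ 2) :=
        Real.sqrt_le_sqrt h2
    _ = _ := Real.sqrt_mul (Finset.sum_nonneg fun p _ => sq_nonneg _) _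

lemma trace_conjTranspose_mul (A B : Matrix (Fin d) (Fin d) ℂ) :
    (Aᴴ * B).trace = ∑ p : Fin d × Fin d, star (A p.1 p.2) * B p.1 p.2 := by
  rw [Matrix.trace, Fintype.sum_prod_type]
  simp only [Matrix.diag_apply, Matrix.mul_apply, Matrix.conjTranspose_apply]
  rw [Finset.sum_comm]

lemma trace_conjTranspose_mul_self_re (A : Matrix (Fin d) (Fin d) ℂ) :
    (Aᴴ * A).trace.re = ∑ p : Fin d × Fin d, ‖A p.1 p.2‖ ^ 2 := by
  rw [trace_conjTranspose_mul, Complex.re_sum]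
  refine Finset.sum_congr rfl fun p _ => ?_
  rw [← Complex.normSq_eq_norm_sq, Complex.star_def, ← Complex.normSq_eq_conj_mul_self]
  rfl

/-- Frobenius Cauchy–Schwarz. -/
lemma frobCS (A B : Matrix (Fin d) (Fin d) ℂ) :
    ‖(Aᴴ * B).trace‖ ≤
      Real.sqrt ((Aᴴ * A).trace.re) * Real.sqrt ((Bᴴ * B).trace.re) := by
  rw [trace_conjTranspose_mul, trace_conjTranspose_mul_self_re,
    trace_conjTranspose_mul_self_re]
  have := csAbs (fun p : Fin d × Fin d => star (A p.1 p.2)) (fun p => B p.1 p.2)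
  simpa using this

lemma psd_trace_nonneg {M : Matrix (Fin d) (Fin d) ℂ} (hM : M.PosSemidef) :
    0 ≤ M.trace := by
  refine Finset.sum_nonneg fun j _ => ?_
  simpa [dotProduct, Pi.single_apply, Matrix.mulVec_single] using hM.dotProduct_mulVec_nonneg (Pi.single j 1)

/-- trace of a product of PSD matrices has nonneg real part. -/
lemma psd_trace_mul_re_nonneg {A B : Matrix (Fin d) (Fin d) ℂ}
    (hA : A.PosSemidef) (hB : B.PosSemidef) : 0 ≤ (A * B).trace.re := by
  classical
  obtain ⟨S, hSH, hS⟩ := psdSqrtEx hA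
  have h1 : (A * B).trace = (Sᴴ * B * S).trace := by
    rw [hSH]
    rw [Matrix.trace_mul_cycle, hS]
  rw [h1]
  exact (Complex.le_def.mp (psd_trace_nonneg (hB.conjTranspose_mul_mul_same S))).1

lemma trhelp (S V : Matrix (Fin d) (Fin d) ℂ) :
    (S * Vᴴ * (V * S)).trace = (S * S * (Vᴴ * V)).trace := by
  rw [Matrix.trace_mul_cycle, Matrix.mul_assoc V S S, Matrix.trace_mul_cycle,
    Matrix.trace_mul_comm]

/-- `Re tr(ρ V) ≤ √(tr ρ) √(tr (ρ VᴴV))` for `ρ` PSD. -/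
lemma trace_mul_cs {ρ : Matrix (Fin d) (Fin d) ℂ} (hρ : ρ.PosSemidef)
    (V : Matrix (Fin d) (Fin d) ℂ) :
    (ρ * V).trace.re ≤ Real.sqrt (ρ.trace.re) * Real.sqrt ((ρ * (Vᴴ * V)).trace.re) := by
  classical
  obtain ⟨S, hSH, hSS⟩ := psdSqrtEx hρ
  have h1 : (Sᴴ * (V * S)).trace = (ρ * V).trace := by
    rw [hSH, Matrix.trace_mul_comm, Matrix.mul_assoc, hSS, Matrix.trace_mul_comm]
  have h2 : (Sᴴ * S).trace = ρ.trace := by rw [hSH, hSS]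
  have h3 : ((V * S)ᴴ * (V * S)).trace = (ρ * (Vᴴ * V)).trace := by
    rw [Matrix.conjTranspose_mul, hSH, trhelp, hSS]
  calc (ρ * V).trace.re = (Sᴴ * (V * S)).trace.re := by rw [h1]
    _ ≤ ‖(Sᴴ * (V * S)).trace‖ := Complex.re_le_norm _
    _ ≤ Real.sqrt ((Sᴴ * S).trace.re) * Real.sqrt (((V * S)ᴴ * (V * S)).trace.re) := frobCS _ _
    _ = _ := by rw [h2, h3]

lemma quadform_le_trace {A : Matrix (Fin d) (Fin d) ℂ} (hA : A.PosSemidef) (v : Fin d → ℂ) :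
    (star v ⬝ᵥ A *ᵥ v).re ≤ A.trace.re * ∑ j, ‖v j‖ ^ 2 := by
  classical
  obtain ⟨S, hSH, hSS⟩ := psdSqrtEx hA
  have h1 : star v ⬝ᵥ A *ᵥ v = star (S *ᵥ v) ⬝ᵥ (S *ᵥ v) := by
    rw [star_mulVec, hSH, ← hSS, ← Matrix.mulVec_mulVec, dotProduct_mulVec]
  have h2 : (star (S *ᵥ v) ⬝ᵥ (S *ᵥ v)).re = ∑ i, ‖(S *ᵥ v) i‖ ^ 2 := by
    simp only [dotProduct, Pi.star_apply, Complex.re_sum]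
    refine Finset.sum_congr rfl fun i _ => ?_
    rw [← Complex.normSq_eq_norm_sq, Complex.star_def, ← Complex.normSq_eq_conj_mul_self]
    rfl
  have hrow : ∀ i, ‖(S *ᵥ v) i‖ ^ 2 ≤
      (∑ j, ‖S i j‖ ^ 2) * ∑ j, ‖v j‖ ^ 2 := by
    intro i
    have hcs := csAbs (fun j => S i j) v
    have hv : (S *ᵥ v) i = ∑ j, S i j * v j := by
      simp [Matrix.mulVec, dotProduct]
    rw [hv]
    calc ‖∑ j, S i j * v j‖ ^ 2
        ≤ (Real.sqrt (∑ j, ‖S i j‖ ^ 2) *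
            Real.sqrt (∑ j, ‖v j‖ ^ 2)) ^ 2 := by
          exact pow_le_pow_left₀ (norm_nonneg _) hcs 2
      _ = _ := by
          rw [mul_pow, Real.sq_sqrt (Finset.sum_nonneg fun j _ => sq_nonneg _),
            Real.sq_sqrt (Finset.sum_nonneg fun j _ => sq_nonneg _)]
  have hAtr : A.trace.re = ∑ i, ∑ j, ‖S i j‖ ^ 2 := by
    have := trace_conjTranspose_mul_self_re (d := d) S
    rw [hSH, hSS] at this
    rw [this, Fintype.sum_prod_type]
  calc (star v ⬝ᵥ A *ᵥ v).re = ∑ i, ‖(S *ᵥ v) i‖ ^ 2 := by rw [h1, h2]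
    _ ≤ ∑ i, (∑ j, ‖S i j‖ ^ 2) * ∑ j, ‖v j‖ ^ 2 :=
        Finset.sum_le_sum fun i _ => hrow i
    _ = _ := by rw [← Finset.sum_mul, hAtr]

lemma term_re (m : ℝ) (z : ℂ) : (star z * ((m : ℂ) * z)).re = m * ‖z‖ ^ 2 := by
  have : star z * ((m : ℂ) * z) = (m : ℂ) * ((Complex.normSq z : ℝ) : ℂ) := by
    rw [Complex.star_def]
    rw [show ((Complex.normSq z : ℝ) : ℂ) = (starRingEnd ℂ) z * z from
      (Complex.normSq_eq_conj_mul_self).symm ▸ rfl]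
    ring
  rw [this, ← Complex.ofReal_mul, Complex.ofReal_re, Complex.normSq_eq_norm_sq]

lemma exists_lam {ρ σ : Matrix (Fin d) (Fin d) ℂ} (hρ : ρ.PosSemidef) (hσ : σ.PosSemidef)
    (hσ0 : σ ≠ 0) (hsupp : ∀ x : Fin d → ℂ, σ *ᵥ x = 0 → ρ *ᵥ x = 0) :
    0 < σ.trace.re ∧ ∃ lam : ℝ, 0 ≤ lam ∧ ((lam : ℂ) • σ - ρ).PosSemidef := by
  classical
  have hH := hσ.1
  set U : Matrix (Fin d) (Fin d) ℂ := (hH.eigenvectorUnitary : Matrix (Fin d) (Fin d) ℂ)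
    with hUdef
  set μ := hH.eigenvalues with hμdef
  have hU1 : U * star U = 1 := (Matrix.mem_unitaryGroup_iff).mp hH.eigenvectorUnitary.2
  have hU2 : star U * U = 1 := (Matrix.mem_unitaryGroup_iff').mp hH.eigenvectorUnitary.2
  have hspec : σ = U * Matrix.diagonal (RCLike.ofReal ∘ μ) * star U := hH.spectral_theorem
  have hμ0 : ∀ j, 0 ≤ μ j := hσ.eigenvalues_nonneg
  -- some eigenvalue is nonzero
  have hex : ∃ j, μ j ≠ 0 := by
    by_contra h
    push_neg at h
    apply hσ0
    rw [hspec]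
    have h2 : (RCLike.ofReal ∘ μ : Fin d → ℂ) = fun _ => 0 := by
      funext j; simp [h j]
    rw [h2, Matrix.diagonal_zero, Matrix.mul_zero, Matrix.zero_mul]
  set T : Finset (Fin d) := Finset.univ.filter (fun j => μ j ≠ 0) with hTdef
  have hTne : T.Nonempty := by
    obtain ⟨j, hj⟩ := hex
    exact ⟨j, by simp [hTdef, hj]⟩
  set μmin : ℝ := T.inf' hTne μ with hmdef
  have hmin_pos : 0 < μmin := by
    rw [hmdef, Finset.lt_inf'_iff]
    intro j hj
    have : μ j ≠ 0 := by simpa [hTdef] using hj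
    exact lt_of_le_of_ne (hμ0 j) (Ne.symm this)
  have hmin_le : ∀ j, μ j ≠ 0 → μmin ≤ μ j := fun j hj =>
    Finset.inf'_le _ (by simp [hTdef, hj])
  -- trace of σ
  have htrσ : σ.trace = ((∑ j, μ j : ℝ) : ℂ) := by
    rw [hspec, Matrix.trace_mul_cycle, hU2, Matrix.one_mul, Matrix.trace_diagonal]
    push_cast [Function.comp]
    rfl
  have htrσ_pos : 0 < σ.trace.re := by
    rw [htrσ, Complex.ofReal_re]
    obtain ⟨j, hj⟩ := hex
    exact Finset.sum_pos' (fun i _ => hμ0 i)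
      ⟨j, Finset.mem_univ j, lt_of_le_of_ne (hμ0 j) (Ne.symm hj)⟩
  refine ⟨htrσ_pos, ?_⟩
  -- the conjugated rho
  set ρ' : Matrix (Fin d) (Fin d) ℂ := star U * ρ * U with hρ'def
  have hρ'psd : ρ'.PosSemidef := hρ.conjTranspose_mul_mul_same U
  have htrρ' : ρ'.trace = ρ.trace := by
    rw [hρ'def, Matrix.trace_mul_cycle, hU1, Matrix.one_mul]
  have hcol : ∀ j, μ j = 0 → ∀ i, ρ' i j = 0 := by
    intro j hj i
    have hσv : σ *ᵥ ⇑(hH.eigenvectorBasis j) = 0 := by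
      rw [hH.mulVec_eigenvectorBasis, ← hμdef, hj]
      simp
    have hρv : ρ *ᵥ ⇑(hH.eigenvectorBasis j) = 0 := hsupp _ hσv
    have hcolv : ρ' *ᵥ Pi.single j 1 = 0 := by
      rw [hρ'def, ← Matrix.mulVec_mulVec, ← Matrix.mulVec_mulVec,
        hH.eigenvectorUnitary_mulVec, hρv, Matrix.mulVec_zero]
    have := congrFun hcolv i
    simpa [Matrix.mulVec_single] using this
  have hrowz : ∀ i, μ i = 0 → ∀ j, ρ' i j = 0 := by
    intro i hi j
    have : ρ' i j = star (ρ' j i) := by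
      conv_lhs => rw [← hρ'psd.1.eq]
      rfl
    rw [this, hcol i hi j, star_zero]
  have hρtr0 : 0 ≤ ρ.trace.re := (Complex.le_def.mp (psd_trace_nonneg hρ)).1
  refine ⟨ρ.trace.re / μmin, by positivity, Matrix.PosSemidef.of_dotProduct_mulVec_nonneg ?_ ?_⟩
  · show ((((ρ.trace.re / μmin : ℝ)) : ℂ) • σ - ρ)ᴴ = _
    rw [Matrix.conjTranspose_sub, Matrix.conjTranspose_smul, hσ.1.eq, hρ.1.eq,
      Complex.star_def, Complex.conj_ofReal]
  · intro x
    set lam : ℝ := ρ.trace.re / μmin with hlam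
    set y := star U *ᵥ x with hy
    have hxy : U *ᵥ y = x := by rw [hy, Matrix.mulVec_mulVec, hU1, Matrix.one_mulVec]
    have hsy : star y = star x ᵥ* U := by
      rw [hy, Matrix.star_mulVec, Matrix.star_eq_conjTranspose,
        Matrix.conjTranspose_conjTranspose]
    have hAσ : star x ⬝ᵥ σ *ᵥ x =
        star y ⬝ᵥ (Matrix.diagonal (RCLike.ofReal ∘ μ) *ᵥ y) := by
      conv_lhs => rw [hspec]
      rw [← Matrix.mulVec_mulVec, ← Matrix.mulVec_mulVec, ← hy,
        dotProduct_mulVec, ← hsy]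
    have hAσre : (star x ⬝ᵥ σ *ᵥ x).re = ∑ j, μ j * ‖y j‖ ^ 2 := by
      rw [hAσ]
      simp only [dotProduct, Matrix.mulVec_diagonal, Pi.star_apply, Complex.re_sum,
        Function.comp]
      exact Finset.sum_congr rfl fun j _ => term_re (μ j) (y j)
    have hρeq : star x ⬝ᵥ ρ *ᵥ x = star y ⬝ᵥ (ρ' *ᵥ y) := by
      rw [hρ'def, ← Matrix.mulVec_mulVec, ← Matrix.mulVec_mulVec, hxy,
        dotProduct_mulVec (star y) (star U)]
      have h5 : star y ᵥ* star U = star x := by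
        rw [Matrix.star_eq_conjTranspose U, ← Matrix.star_mulVec, hxy]
      rw [h5]
    set z : Fin d → ℂ := fun j => if μ j = 0 then 0 else y j with hz
    have hzsq : ∀ j, ‖z j‖ ^ 2 = if μ j = 0 then 0 else ‖y j‖ ^ 2 := by
      intro j; by_cases h : μ j = 0 <;> simp [hz, h]
    have hρz : star y ⬝ᵥ (ρ' *ᵥ y) = star z ⬝ᵥ (ρ' *ᵥ z) := by
      simp only [dotProduct, Matrix.mulVec, Pi.star_apply, Finset.mul_sum]
      refine Finset.sum_congr rfl fun i _ => Finset.sum_congr rfl fun j _ => ?_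
      by_cases hi : μ i = 0
      · simp [hrowz i hi j]
      · by_cases hj : μ j = 0
        · simp [hcol j hj i]
        · simp [hz, hi, hj]
    have hquad := quadform_le_trace hρ'psd z
    set N := ∑ j, ‖z j‖ ^ 2 with hN
    have hN0 : 0 ≤ N := Finset.sum_nonneg fun j _ => sq_nonneg _
    have hσge : μmin * N ≤ (star x ⬝ᵥ σ *ᵥ x).re := by
      rw [hAσre, hN, Finset.mul_sum]
      refine Finset.sum_le_sum fun j _ => ?_
      rw [hzsq j]
      by_cases h : μ j = 0
      · simp [h]
      · rw [if_neg h]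
        exact mul_le_mul_of_nonneg_right (hmin_le j h) (sq_nonneg _)
    have hρle : (star x ⬝ᵥ ρ *ᵥ x).re ≤ ρ.trace.re * N := by
      rw [hρeq, hρz]
      calc (star z ⬝ᵥ ρ' *ᵥ z).re ≤ ρ'.trace.re * N := hquad
        _ = ρ.trace.re * N := by rw [htrρ']
    have hkey : (star x ⬝ᵥ ρ *ᵥ x).re ≤ lam * (star x ⬝ᵥ σ *ᵥ x).re := by
      have h1 : ρ.trace.re * N = lam * (μmin * N) := by
        rw [hlam]; field_simp
      calc (star x ⬝ᵥ ρ *ᵥ x).re ≤ ρ.trace.re * N := hρle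
        _ = lam * (μmin * N) := h1
        _ ≤ lam * (star x ⬝ᵥ σ *ᵥ x).re :=
            mul_le_mul_of_nonneg_left hσge (by positivity)
    have himσ : (star x ⬝ᵥ σ *ᵥ x).im = 0 := ((Complex.le_def.mp (hσ.dotProduct_mulVec_nonneg x)).2).symm
    have himρ : (star x ⬝ᵥ ρ *ᵥ x).im = 0 := ((Complex.le_def.mp (hρ.dotProduct_mulVec_nonneg x)).2).symm
    show 0 ≤ star x ⬝ᵥ (((lam : ℝ) : ℂ) • σ - ρ) *ᵥ x
    rw [Matrix.sub_mulVec, dotProduct_sub, Matrix.smul_mulVec,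
      dotProduct_smul, Complex.le_def]
    constructor
    · simp only [Complex.zero_re, Complex.sub_re, smul_eq_mul, Complex.mul_re,
        Complex.ofReal_re, Complex.ofReal_im, zero_mul, sub_zero]
      linarith [hkey]
    · simp only [Complex.zero_im, Complex.sub_im, smul_eq_mul, Complex.mul_im,
        Complex.ofReal_re, Complex.ofReal_im, zero_mul, add_zero]
      rw [himσ, himρ]
      ring

lemma scalar_bound {a b θ : ℝ} (ha : 0 ≤ a) (hb : 0 < b) (hθ0 : 0 < θ) (hθ1 : θ < 1) :
    ∀ t : ℝ, 0 ≤ t → a * t ^ θ - b * t ≤ a * ((a / b) ^ (1 / (1 - θ))) ^ θ := by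
  intro t ht
  set M := (a / b) ^ (1 / (1 - θ)) with hM
  have hM0 : 0 ≤ M := Real.rpow_nonneg (by positivity) _
  by_cases hle : t ≤ M
  · have h4 : a * t ^ θ ≤ a * M ^ θ :=
      mul_le_mul_of_nonneg_left (Real.rpow_le_rpow ht hle hθ0.le) ha
    have h5 : 0 ≤ b * t := mul_nonneg hb.le ht
    linarith
  · push_neg at hle
    have h1 : M ^ (1 - θ) = a / b := by
      rw [hM, ← Real.rpow_mul (by positivity), one_div,
        inv_mul_cancel₀ (by linarith : (1:ℝ) - θ ≠ 0), Real.rpow_one]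
    have h2 : a ≤ b * t ^ (1 - θ) := by
      have h6 : M ^ (1 - θ) ≤ t ^ (1 - θ) := Real.rpow_le_rpow hM0 hle.le (by linarith)
      rw [h1] at h6
      calc a = b * (a / b) := by field_simp
        _ ≤ b * t ^ (1 - θ) := mul_le_mul_of_nonneg_left h6 hb.le
    have ht0 : 0 < t := lt_of_le_of_lt hM0 hle
    have h3 : a * t ^ θ ≤ b * t := by
      calc a * t ^ θ ≤ b * t ^ (1 - θ) * t ^ θ :=
            mul_le_mul_of_nonneg_right h2 (Real.rpow_nonneg ht _)
        _ = b * t := by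
            rw [mul_assoc, ← Real.rpow_add ht0, sub_add_cancel, Real.rpow_one]
    have h7 : 0 ≤ a * M ^ θ := mul_nonneg ha (Real.rpow_nonneg hM0 _)
    linarith

lemma smulId_psd {r : ℝ} (hr : 0 ≤ r) :
    (((r : ℂ)) • (1 : Matrix (Fin d) (Fin d) ℂ)).PosSemidef := by
  have h : ((r : ℂ)) • (1 : Matrix (Fin d) (Fin d) ℂ) =
      Matrix.diagonal (fun _ => (r : ℂ)) := by
    rw [Matrix.smul_one_eq_diagonal]
  rw [h]
  exact Matrix.PosSemidef.diagonal fun i => Complex.le_def.mpr (by simp [hr])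

lemma coeff_real (c : ℝ) (p q : ℕ) : (2:ℂ)^p * (c:ℂ)^q = ((2^p * c^q : ℝ) : ℂ) := by
  push_cast; ring

lemma addCT (x : ℝ) : ((x:ℂ) • (1 : Matrix (Fin d) (Fin d) ℂ)) +
    ((x:ℂ) • (1 : Matrix (Fin d) (Fin d) ℂ))ᴴ = (((2*x : ℝ) : ℂ)) • 1 := by
  rw [Matrix.conjTranspose_smul, Matrix.conjTranspose_one, Complex.star_def,
    Complex.conj_ofReal, ← add_smul]
  congr 1
  push_cast; ring

lemma mulCT (y : ℝ) : ((y:ℂ) • (1 : Matrix (Fin d) (Fin d) ℂ))ᴴ *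
    ((y:ℂ) • (1 : Matrix (Fin d) (Fin d) ℂ)) = (((y^2 : ℝ) : ℂ)) • 1 := by
  rw [Matrix.conjTranspose_smul, Matrix.conjTranspose_one, Complex.star_def,
    Complex.conj_ofReal, Matrix.smul_mul, Matrix.mul_smul, Matrix.one_mul, smul_smul]
  congr 1
  push_cast; ring

lemma constraint_psd (x y : ℝ) (h : y^2 ≤ x) :
    ((2:ℂ)⁻¹ • (((x:ℂ) • (1 : Matrix (Fin d) (Fin d) ℂ)) +
        ((x:ℂ) • (1 : Matrix (Fin d) (Fin d) ℂ))ᴴ) -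
      ((y:ℂ) • (1 : Matrix (Fin d) (Fin d) ℂ))ᴴ *
        ((y:ℂ) • (1 : Matrix (Fin d) (Fin d) ℂ))).PosSemidef := by
  have e : (2:ℂ)⁻¹ • (((x:ℂ) • (1 : Matrix (Fin d) (Fin d) ℂ)) +
        ((x:ℂ) • (1 : Matrix (Fin d) (Fin d) ℂ))ᴴ) -
      ((y:ℂ) • (1 : Matrix (Fin d) (Fin d) ℂ))ᴴ *
        ((y:ℂ) • (1 : Matrix (Fin d) (Fin d) ℂ)) = (((x - y^2 : ℝ) : ℂ)) • 1 := by
    rw [addCT, mulCT, smul_smul, ← sub_smul]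
    congr 1
    push_cast; ring
  rw [e]
  exact smulId_psd (by linarith)

lemma sub_psd (x y : ℝ) (h : y^2 ≤ x) :
    ((x:ℂ) • (1 : Matrix (Fin d) (Fin d) ℂ) -
      ((y:ℂ) • (1 : Matrix (Fin d) (Fin d) ℂ))ᴴ *
        ((y:ℂ) • (1 : Matrix (Fin d) (Fin d) ℂ))).PosSemidef := by
  have e : (x:ℂ) • (1 : Matrix (Fin d) (Fin d) ℂ) -
      ((y:ℂ) • (1 : Matrix (Fin d) (Fin d) ℂ))ᴴ *
        ((y:ℂ) • (1 : Matrix (Fin d) (Fin d) ℂ)) = (((x - y^2 : ℝ) : ℂ)) • 1 := by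
    rw [mulCT, ← sub_smul]
    congr 1
    push_cast; ring
  rw [e]
  exact smulId_psd (by linarith)

lemma pow_step (c : ℝ) (hc : 0 ≤ c) (j : ℕ) :
    (2^(2^j - 1) * c^(2^j))^2 ≤ 2^(2^(j+1) - 1) * c^(2^(j+1)) := by
  have h1 : 1 ≤ 2^j := Nat.one_le_two_pow
  have hexp : 2 * 2^j = 2^(j+1) := by rw [pow_succ]; ring
  have e1 : (2^(2^j - 1) * c^(2^j))^2 = 2^(2^(j+1) - 2) * c^(2^(j+1)) := by
    rw [mul_pow, ← pow_mul, ← pow_mul]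
    congr 2 <;> omega
  rw [e1]
  have h2 : (2:ℝ)^(2^(j+1) - 2) ≤ 2^(2^(j+1) - 1) :=
    pow_le_pow_right₀ one_le_two (by omega)
  exact mul_le_mul_of_nonneg_right h2 (pow_nonneg hc _)

lemma feas_scalar (k : ℕ) (hk : 1 ≤ k) (c : ℝ) (hc : 0 ≤ c) :
    QimFeasible k
      (fun i => ((2 : ℂ) ^ (2 ^ (i - 1) - 1) * (c : ℂ) ^ (2 ^ (i - 1))) •
        (1 : Matrix (Fin d) (Fin d) ℂ))
      (((2 : ℂ) ^ (2 ^ k - 1) * (c : ℂ) ^ (2 ^ k)) • (1 : Matrix (Fin d) (Fin d) ℂ)) := by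
  refine ⟨?_, ?_, ?_, ?_⟩
  · rw [coeff_real]; exact smulId_psd (by positivity)
  · simp only []
    rw [coeff_real, addCT]
    exact smulId_psd (by positivity)
  · intro i hi1 hik
    simp only []
    rw [coeff_real, coeff_real]
    obtain ⟨j, rfl⟩ : ∃ j, i = j + 1 := ⟨i - 1, by omega⟩
    simp only [Nat.add_sub_cancel]
    exact constraint_psd _ _ (pow_step c hc j)
  · simp only []
    rw [coeff_real, coeff_real]
    obtain ⟨j, rfl⟩ : ∃ j, k = j + 1 := ⟨k - 1, by omega⟩
    simp only [Nat.add_sub_cancel]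
    exact sub_psd _ _ (pow_step c hc j)

lemma trace_mul_smulId_re (M : Matrix (Fin d) (Fin d) ℂ) (w : ℝ) :
    (M * ((w : ℂ) • (1 : Matrix (Fin d) (Fin d) ℂ))).trace.re = w * M.trace.re := by
  rw [Matrix.mul_smul, Matrix.mul_one, Matrix.trace_smul]
  simp [Complex.mul_re]

lemma obj_scalar (k : ℕ) (ρ σ : Matrix (Fin d) (Fin d) ℂ) (c : ℝ) :
    QimObj k ρ σ
      (fun i => ((2 : ℂ) ^ (2 ^ (i - 1) - 1) * (c : ℂ) ^ (2 ^ (i - 1))) •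
        (1 : Matrix (Fin d) (Fin d) ℂ))
      (((2 : ℂ) ^ (2 ^ k - 1) * (c : ℂ) ^ (2 ^ k)) • (1 : Matrix (Fin d) (Fin d) ℂ)) =
    alphaIM k * c * ρ.trace.re -
      (alphaIM k - 1) * 2 ^ (2 ^ k - 1) * c ^ (2 ^ k) * σ.trace.re := by
  unfold QimObj
  simp only []
  rw [coeff_real, coeff_real, addCT, trace_mul_smulId_re, trace_mul_smulId_re]
  norm_num
  ring

lemma alpha_gt_one {k : ℕ} (hk : 1 ≤ k) : 1 < alphaIM k := by
  unfold alphaIM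
  have h2 : (2:ℝ) ≤ 2 ^ k := by
    calc (2:ℝ) = 2 ^ 1 := (pow_one 2).symm
    _ ≤ 2 ^ k := pow_le_pow_right₀ one_le_two hk
  have : (0:ℝ) < 2 ^ k - 1 := by linarith
  have : 0 < 1 / ((2:ℝ) ^ k - 1) := by positivity
  linarith


lemma bdd_above_qim (k : ℕ) (hk : 1 ≤ k) (ρ σ : Matrix (Fin d) (Fin d) ℂ)
    (hρ : ρ.PosSemidef) (hρtr : ρ.trace = 1) (hσ : σ.PosSemidef) (hσ0 : σ ≠ 0)
    (hsupp : ∀ x : Fin d → ℂ, σ *ᵥ x = 0 → ρ *ᵥ x = 0) :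
    BddAbove {q : ℝ | ∃ V Z, QimFeasible k V Z ∧ q = QimObj k ρ σ V Z} := by
  obtain ⟨htrσ, lam, hlam0, hlampsd⟩ := exists_lam hρ hσ hσ0 hsupp
  have hρtr_re : ρ.trace.re = 1 := by rw [hρtr]; simp
  set α := alphaIM k with hα
  have hα1 : 1 < α := alpha_gt_one hk
  set θ : ℝ := ((2:ℝ)⁻¹) ^ k with hθ
  have hθ0 : 0 < θ := by positivity
  have hθ1 : θ < 1 := by
    rw [hθ]
    exact pow_lt_one₀ (by norm_num) (by norm_num) (by omega)
  set a : ℝ := α * lam ^ θ with ha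
  have ha0 : 0 ≤ a := mul_nonneg (by linarith) (Real.rpow_nonneg hlam0 _)
  set b : ℝ := α - 1 with hb
  have hb0 : 0 < b := by rw [hb]; linarith
  refine ⟨a * ((a / b) ^ (1 / (1 - θ))) ^ θ, ?_⟩
  rintro q ⟨V, Z, hF, rfl⟩
  set T := (ρ * Z).trace.re with hT
  set s := (σ * Z).trace.re with hs
  have hT0 : 0 ≤ T := psd_trace_mul_re_nonneg hρ hF.1
  have hs0 : 0 ≤ s := psd_trace_mul_re_nonneg hσ hF.1
  -- T ≤ lam * s
  have hTs : T ≤ lam * s := by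
    have h0 := psd_trace_mul_re_nonneg hlampsd hF.1
    have he : ((lam : ℂ) • σ - ρ) * Z = (lam : ℂ) • (σ * Z) - ρ * Z := by
      rw [Matrix.sub_mul, Matrix.smul_mul]
    rw [he, Matrix.trace_sub, Matrix.trace_smul] at h0
    simp only [Complex.sub_re, smul_eq_mul, Complex.mul_re, Complex.ofReal_re,
      Complex.ofReal_im, zero_mul, sub_zero] at h0
    rw [hT, hs]
    linarith
  -- the chain
  have hr1 : ∀ i, (ρ * (V i + (V i)ᴴ)).trace.re / 2 ≤
      Real.sqrt ((ρ * ((V i)ᴴ * V i)).trace.re) := by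
    intro i
    have hstar : (ρ * (V i)ᴴ).trace = star ((ρ * V i).trace) := by
      have : ρ * (V i)ᴴ = (V i * ρ)ᴴ := by
        rw [Matrix.conjTranspose_mul, hρ.1.eq]
      rw [this, Matrix.trace_conjTranspose, Matrix.trace_mul_comm]
    have hre : (ρ * (V i + (V i)ᴴ)).trace.re / 2 = (ρ * V i).trace.re := by
      rw [Matrix.mul_add, Matrix.trace_add, hstar]
      simp only [Complex.add_re, Complex.star_def, Complex.conj_re]
      ring
    rw [hre]
    have := trace_mul_cs hρ (V i)
    rwa [hρtr_re, Real.sqrt_one, one_mul] at this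
  have hq0 : ∀ i, 0 ≤ (ρ * ((V i)ᴴ * V i)).trace.re := fun i =>
    psd_trace_mul_re_nonneg hρ (Matrix.posSemidef_conjTranspose_mul_self _)
  have hstep : ∀ i, 1 ≤ i → i < k →
      (ρ * ((V i)ᴴ * V i)).trace.re ≤ (ρ * (V (i+1) + (V (i+1))ᴴ)).trace.re / 2 := by
    intro i hi1 hik
    have h0 := psd_trace_mul_re_nonneg hρ (hF.2.2.1 i hi1 hik)
    have he : ρ * ((2:ℂ)⁻¹ • (V (i+1) + (V (i+1))ᴴ) - (V i)ᴴ * V i) =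
        (2:ℂ)⁻¹ • (ρ * (V (i+1) + (V (i+1))ᴴ)) - ρ * ((V i)ᴴ * V i) := by
      rw [Matrix.mul_sub, Matrix.mul_smul]
    rw [he, Matrix.trace_sub, Matrix.trace_smul] at h0
    simp only [Complex.sub_re, smul_eq_mul, Complex.mul_re, Complex.inv_re, Complex.inv_im] at h0
    norm_num at h0
    linarith
  have hlast : (ρ * ((V k)ᴴ * V k)).trace.re ≤ T := by
    have h0 := psd_trace_mul_re_nonneg hρ hF.2.2.2
    have he : ρ * (Z - (V k)ᴴ * V k) = ρ * Z - ρ * ((V k)ᴴ * V k) := by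
      rw [Matrix.mul_sub]
    rw [he, Matrix.trace_sub] at h0
    simp only [Complex.sub_re] at h0
    rw [hT]
    linarith
  have hchain : ∀ m, ∀ i, 1 ≤ i → i + m = k →
      (ρ * (V i + (V i)ᴴ)).trace.re / 2 ≤ T ^ (((2:ℝ)⁻¹) ^ (m+1)) := by
    intro m
    induction m with
    | zero =>
      intro i hi1 hik
      have hik' : i = k := by omega
      subst hik'
      calc (ρ * (V i + (V i)ᴴ)).trace.re / 2
          ≤ Real.sqrt ((ρ * ((V i)ᴴ * V i)).trace.re) := hr1 i
        _ ≤ Real.sqrt T := Real.sqrt_le_sqrt hlast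
        _ = T ^ (((2:ℝ)⁻¹) ^ (0+1)) := by
            rw [Real.sqrt_eq_rpow]; norm_num
    | succ m ih =>
      intro i hi1 hik
      have hik' : i < k := by omega
      calc (ρ * (V i + (V i)ᴴ)).trace.re / 2
          ≤ Real.sqrt ((ρ * ((V i)ᴴ * V i)).trace.re) := hr1 i
        _ ≤ Real.sqrt ((ρ * (V (i+1) + (V (i+1))ᴴ)).trace.re / 2) :=
            Real.sqrt_le_sqrt (hstep i hi1 hik')
        _ ≤ Real.sqrt (T ^ (((2:ℝ)⁻¹) ^ (m+1))) :=
            Real.sqrt_le_sqrt (ih (i+1) (by omega) (by omega))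
        _ = T ^ (((2:ℝ)⁻¹) ^ (m+1+1)) := by
            rw [Real.sqrt_eq_rpow, ← Real.rpow_mul hT0]
            congr 1
            rw [pow_succ]
            ring
  have hr1T : (ρ * (V 1 + (V 1)ᴴ)).trace.re / 2 ≤ T ^ θ := by
    have := hchain (k-1) 1 le_rfl (by omega)
    rwa [show k - 1 + 1 = k from by omega, ← hθ] at this
  -- conclude
  have hTθ : T ^ θ ≤ lam ^ θ * s ^ θ := by
    calc T ^ θ ≤ (lam * s) ^ θ := Real.rpow_le_rpow hT0 hTs hθ0.le
      _ = lam ^ θ * s ^ θ := Real.mul_rpow hlam0 hs0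
  have hsθ : 0 ≤ s ^ θ := Real.rpow_nonneg hs0 _
  have hbound := scalar_bound ha0 hb0 hθ0 hθ1 s hs0
  show α * ((ρ * (V 1 + (V 1)ᴴ)).trace.re / 2) - (α - 1) * s ≤ _
  calc α * ((ρ * (V 1 + (V 1)ᴴ)).trace.re / 2) - (α - 1) * s
      ≤ α * (lam ^ θ * s ^ θ) - (α - 1) * s := by
        have := mul_le_mul_of_nonneg_left (hr1T.trans hTθ) (by linarith : (0:ℝ) ≤ α)
        linarith
    _ = a * s ^ θ - b * s := by rw [ha, hb]; ring
    _ ≤ a * ((a / b) ^ (1 / (1 - θ))) ^ θ := hbound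

/-- strict positivity of `Q^{im}_{α_k}(ρ‖σ)`, witnessed by explicit scalar
feasible points with strictly positive objective value. -/
theorem stmt_19 (d k : ℕ) (hk : 1 ≤ k) (ρ σ : Matrix (Fin d) (Fin d) ℂ)
    (hρ : ρ.PosSemidef) (hρtr : ρ.trace = 1) (hσ : σ.PosSemidef) (hσ0 : σ ≠ 0)
    (hsupp : ∀ x : Fin d → ℂ, σ *ᵥ x = 0 → ρ *ᵥ x = 0) :
    0 < Qim k ρ σ ∧
    ∀ c : ℝ, 0 < c →
      c < ((2 : ℝ) ^ ((1 : ℝ) - 2 ^ k) * (alphaIM k / (alphaIM k - 1)) *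
          (ρ.trace.re / σ.trace.re)) ^ (1 / ((2 : ℝ) ^ k - 1)) →
      QimFeasible k
        (fun i => ((2 : ℂ) ^ (2 ^ (i - 1) - 1) * (c : ℂ) ^ (2 ^ (i - 1))) •
          (1 : Matrix (Fin d) (Fin d) ℂ))
        (((2 : ℂ) ^ (2 ^ k - 1) * (c : ℂ) ^ (2 ^ k)) • (1 : Matrix (Fin d) (Fin d) ℂ)) ∧
      0 < alphaIM k * c * ρ.trace.re -
          (alphaIM k - 1) * 2 ^ (2 ^ k - 1) * c ^ (2 ^ k) * σ.trace.re := by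
  have hρtr_re : ρ.trace.re = 1 := by rw [hρtr]; simp
  have htrσ : 0 < σ.trace.re := (exists_lam hρ hσ hσ0 hsupp).1
  have hα1 : 1 < alphaIM k := alpha_gt_one hk
  have hα10 : 0 < alphaIM k - 1 := by linarith
  have hn : 1 ≤ 2^k := Nat.one_le_two_pow
  have h2k : (2:ℝ) ≤ (2:ℝ)^k := by
    calc (2:ℝ) = 2^1 := (pow_one 2).symm
      _ ≤ 2^k := pow_le_pow_right₀ one_le_two hk
  have hn0 : (0:ℝ) < (2:ℝ)^k - 1 := by linarith
  have hcast : ((2^k - 1 : ℕ) : ℝ) = (2:ℝ)^k - 1 := by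
    rw [Nat.cast_sub hn]; push_cast; ring
  set X := (2:ℝ)^((1:ℝ) - 2^k) * (alphaIM k / (alphaIM k - 1)) *
      (ρ.trace.re / σ.trace.re) with hX
  have hX0 : 0 < X := by
    rw [hX, hρtr_re]
    have h1 := Real.rpow_pos_of_pos (by norm_num : (0:ℝ) < 2) ((1:ℝ) - 2^k)
    have h2 : 0 < alphaIM k / (alphaIM k - 1) := div_pos (by linarith) hα10
    have h3 : 0 < (1:ℝ) / σ.trace.re := by positivity
    positivity
  have hpart2 : ∀ c : ℝ, 0 < c →
      c < X ^ (1 / ((2 : ℝ) ^ k - 1)) →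
      QimFeasible k
        (fun i => ((2 : ℂ) ^ (2 ^ (i - 1) - 1) * (c : ℂ) ^ (2 ^ (i - 1))) •
          (1 : Matrix (Fin d) (Fin d) ℂ))
        (((2 : ℂ) ^ (2 ^ k - 1) * (c : ℂ) ^ (2 ^ k)) • (1 : Matrix (Fin d) (Fin d) ℂ)) ∧
      0 < alphaIM k * c * ρ.trace.re -
          (alphaIM k - 1) * 2 ^ (2 ^ k - 1) * c ^ (2 ^ k) * σ.trace.re := by
    intro c hc0 hcB
    refine ⟨feas_scalar k hk c hc0.le, ?_⟩
    have h1 : c ^ ((2:ℝ)^k - 1) < X := by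
      have h := Real.rpow_lt_rpow hc0.le hcB hn0
      rwa [← Real.rpow_mul hX0.le, one_div, inv_mul_cancel₀ (ne_of_gt hn0),
        Real.rpow_one] at h
    have h2 : c ^ ((2^k - 1 : ℕ)) < X := by
      rw [← Real.rpow_natCast c (2^k - 1), hcast]; exact h1
    set P := (alphaIM k - 1) * 2^((2^k - 1 : ℕ)) * σ.trace.re * c with hP
    have hP0 : 0 < P := by
      apply mul_pos (mul_pos (mul_pos hα10 (by positivity)) htrσ) hc0
    have h3 : P * c^((2^k - 1 : ℕ)) < P * X := mul_lt_mul_of_pos_left h2 hP0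
    have hcc : c^(2^k : ℕ) = c^((2^k - 1 : ℕ)) * c := by
      rw [← pow_succ]; congr 1; omega
    have hL : P * c^((2^k - 1 : ℕ)) =
        (alphaIM k - 1) * 2^(2^k - 1) * c^(2^k) * σ.trace.re := by
      rw [hP, hcc]; ring
    have hrp : (2:ℝ)^((1:ℝ) - 2^k) = 2 / (2:ℝ)^(2^k : ℕ) := by
      rw [Real.rpow_sub (by norm_num : (0:ℝ) < 2), Real.rpow_one]
      congr 1
      rw [← Real.rpow_natCast 2 (2^k)]
      congr 1
      push_cast; ring
    have hpp : (2:ℝ)^(2^k : ℕ) = 2^((2^k - 1 : ℕ)) * 2 := by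
      rw [← pow_succ]; congr 1; omega
    have hR : P * X = alphaIM k * c * ρ.trace.re := by
      rw [hP, hX, hρtr_re, hrp, hpp]
      field_simp
    have h4 : (alphaIM k - 1) * 2^(2^k - 1) * c^(2^k) * σ.trace.re <
        alphaIM k * c * ρ.trace.re := by
      rw [← hL, ← hR]; exact h3
    linarith
  refine ⟨?_, hpart2⟩
  set B := X ^ (1 / ((2 : ℝ) ^ k - 1)) with hB
  have hB0 : 0 < B := Real.rpow_pos_of_pos hX0 _
  obtain ⟨hfeas, hpos⟩ := hpart2 (B/2) (by positivity) (by linarith)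
  have hobj : 0 < QimObj k ρ σ
      (fun i => ((2 : ℂ) ^ (2 ^ (i - 1) - 1) * ((B/2 : ℝ) : ℂ) ^ (2 ^ (i - 1))) •
        (1 : Matrix (Fin d) (Fin d) ℂ))
      (((2 : ℂ) ^ (2 ^ k - 1) * ((B/2 : ℝ) : ℂ) ^ (2 ^ k)) •
        (1 : Matrix (Fin d) (Fin d) ℂ)) := by
    rw [obj_scalar]
    exact hpos
  refine lt_of_lt_of_le hobj ?_
  exact le_csSup (bdd_above_qim k hk ρ σ hρ hρtr hσ hσ0 hsupp)
    ⟨_, _, hfeas, rfl⟩
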